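/- (User-privacy of the explicit scheme.) In the explicit SPIR scheme, for every database index n ∈ {1,…,N} and all message indices k, k' ∈ {1,…,K}, the tuples (Q_n^{[k]}, A_n^{[k]}, W_1, …, W_K, S) and (Q_n^{[k']}, A_n^{[k']}, W_1, …, W_K, S) are identically distributed; in particular, each query Q_n^{[k]} is uniformly distributed on (ZMod 2)^{(N−1)K} regardless of k. -/

import Mathlib

open Finset

attribute [local instance] Classical.propDecidable

/-- Probability that the random variable `X` takes the value `a`, on a finite
sample space `Ω` with probability mass function `p`. -/
noncomputable def prob {Ω α : Type*} [Fintype Ω] (p : Ω → ℝ) (X : Ω → α) (a : α) : ℝ :=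
  ∑ ω : Ω, if X ω = a then p ω else 0

/-- Shannon entropy (in bits) of the random variable `X`. -/
noncomputable def ent {Ω α : Type*} [Fintype Ω] [Fintype α] (p : Ω → ℝ) (X : Ω → α) : ℝ :=
  - ∑ a : α, prob p X a * Real.logb 2 (prob p X a)

/-- Conditional Shannon entropy (in bits) `H(X | Y)`. -/
noncomputable def condEnt {Ω α β : Type*} [Fintype Ω] [Fintype α] [Fintype β]
    (p : Ω → ℝ) (X : Ω → α) (Y : Ω → β) : ℝ :=
  ent p (fun ω => (X ω, Y ω)) - ent p Y

/-- Shannon mutual information (in bits) `I(X ; Y)`. -/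
noncomputable def mutInfo {Ω α β : Type*} [Fintype Ω] [Fintype α] [Fintype β]
    (p : Ω → ℝ) (X : Ω → α) (Y : Ω → β) : ℝ :=
  ent p X + ent p Y - ent p (fun ω => (X ω, Y ω))

/-- `X` and `Y` are identically distributed. -/
def IdentDist {Ω α : Type*} [Fintype Ω] (p : Ω → ℝ) (X Y : Ω → α) : Prop :=
  ∀ a : α, prob p X a = prob p Y a

/-- `X` is uniformly distributed on `α`. -/
def Unif {Ω α : Type*} [Fintype Ω] [Fintype α] (p : Ω → ℝ) (X : Ω → α) : Prop :=
  ∀ a : α, prob p X a = 1 / (Fintype.card α : ℝ)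

/-- The sample space of the explicit SPIR scheme: the message bits
`x = (x_{k,i})_{k ∈ [K], i ∈ [N−1]}`, the common-randomness bit `S`,
and the user-randomness bits `h = (h_{j,i})_{j ∈ [K], i ∈ [N−1]}`. -/
abbrev SchemeOmega (K N : ℕ) : Type :=
  (Fin K → Fin (N - 1) → ZMod 2) × ZMod 2 × (Fin K → Fin (N - 1) → ZMod 2)

/-- The uniform probability mass function on the sample space: all message bits, the
common-randomness bit and the user-randomness bits are i.i.d. uniform. -/
noncomputable def unifP (K N : ℕ) : SchemeOmega K N → ℝ :=
  fun _ => (Fintype.card (SchemeOmega K N) : ℝ)⁻¹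

/-- The query sent to database `n` when the desired message index is `k`:
`Q_1^[k] = h` for the first database (`n = 0`), and `Q_{m+1}^[k] = h + e_{k,m}` for
database `m + 1`, where `e_{k,m}` has a single `1` in coordinate `(k, m)`. -/
def query (K N : ℕ) (k : Fin K) (n : Fin N) (h : Fin K → Fin (N - 1) → ZMod 2) :
    Fin K → Fin (N - 1) → ZMod 2 :=
  fun j i => h j i + (if j = k ∧ (i : ℕ) + 1 = (n : ℕ) then 1 else 0)

/-- The answer of database `n`: the inner product `⟨Q_n^[k], x⟩` of the received query with
the message bits, plus the common-randomness bit `S`. -/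
def answer (K N : ℕ) (k : Fin K) (n : Fin N) (ω : SchemeOmega K N) : ZMod 2 :=
  (∑ j : Fin K, ∑ i : Fin (N - 1), query K N k n ω.2.2 j i * ω.1 j i) + ω.2.1

/-- The offset vector `e_{k,m}` implicit in `query`. -/
def dvec (K N : ℕ) (k : Fin K) (n : Fin N) : Fin K → Fin (N - 1) → ZMod 2 :=
  fun j i => if j = k ∧ (i : ℕ) + 1 = (n : ℕ) then 1 else 0

lemma query_eq (K N : ℕ) (k : Fin K) (n : Fin N) (h : Fin K → Fin (N - 1) → ZMod 2) :
    query K N k n h = h + dvec K N k n := rfl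

lemma zmod2_add_self (x : ZMod 2) : x + x = 0 := by fin_cases x <;> rfl

lemma fun_add_self (K N : ℕ) (f : Fin K → Fin (N - 1) → ZMod 2) : f + f = 0 := by
  funext j i
  exact zmod2_add_self (f j i)

lemma query_shift (K N : ℕ) (k k' : Fin K) (n : Fin N)
    (h : Fin K → Fin (N - 1) → ZMod 2) :
    query K N k' n (h + (dvec K N k n + dvec K N k' n)) = query K N k n h := by
  rw [query_eq, query_eq]
  have : dvec K N k' n + dvec K N k' n = 0 := fun_add_self K N _
  rw [add_assoc, add_assoc, this, add_zero]

/-- The shift involution on the sample space. -/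
def shiftMap (K N : ℕ) (d : Fin K → Fin (N - 1) → ZMod 2) :
    SchemeOmega K N → SchemeOmega K N :=
  fun ω => (ω.1, ω.2.1, ω.2.2 + d)

lemma shiftMap_involutive (K N : ℕ) (d : Fin K → Fin (N - 1) → ZMod 2) :
    Function.Involutive (shiftMap K N d) := by
  intro ω
  simp only [shiftMap, add_assoc, fun_add_self K N d, add_zero]

/-- (User-privacy of the explicit scheme.) For every database index `n`
and all message indices `k, k'`, the tuples `(Q_n^[k], A_n^[k], W_1, …, W_K, S)` and
`(Q_n^[k'], A_n^[k'], W_1, …, W_K, S)` are identically distributed; in particular each query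
`Q_n^[k]` is uniformly distributed on `(ZMod 2)^{(N−1)K}` regardless of `k`. -/
theorem explicit_scheme_user_privacy (K N : ℕ) (hK : 2 ≤ K) (hN : 2 ≤ N) :
    ∀ (n : Fin N) (k k' : Fin K),
      IdentDist (unifP K N)
        (fun ω => (query K N k n ω.2.2, answer K N k n ω, ω.1, ω.2.1))
        (fun ω => (query K N k' n ω.2.2, answer K N k' n ω, ω.1, ω.2.1)) ∧
      Unif (unifP K N) (fun ω => query K N k n ω.2.2) := by
  intro n k k'
  constructor
  · -- identical distribution via the shift involution
    intro a
    unfold prob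
    refine Fintype.sum_equiv
      ((shiftMap_involutive K N (dvec K N k n + dvec K N k' n)).toPerm) _ _ ?_
    intro ω
    simp only [Function.Involutive.coe_toPerm, shiftMap]
    have hq := query_shift K N k k' n ω.2.2
    have ha : answer K N k' n (ω.1, ω.2.1, ω.2.2 + (dvec K N k n + dvec K N k' n))
        = answer K N k n ω := by
      simp only [answer]
      rw [hq]
    simp only [hq, ha]
    congr 1
  · -- uniformity of the query
    intro a
    unfold prob unifP
    rw [Fintype.sum_prod_type]
    have hinner :
        (∑ h : Fin K → Fin (N - 1) → ZMod 2,
          @ite ℝ (query K N k n h = a) (Classical.propDecidable _)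
            (Fintype.card (SchemeOmega K N) : ℝ)⁻¹ 0)
        = (Fintype.card (SchemeOmega K N) : ℝ)⁻¹ := by
      have hcond : ∀ h : Fin K → Fin (N - 1) → ZMod 2,
          (query K N k n h = a) ↔ (h = a + dvec K N k n) := by
        intro h
        rw [query_eq]
        constructor
        · intro he
          rw [← he, add_assoc, fun_add_self K N, add_zero]
        · intro he
          rw [he, add_assoc, fun_add_self K N, add_zero]
      simp only [hcond]
      simp [Finset.sum_ite_eq']
    have key :
        (∑ q : ZMod 2 × (Fin K → Fin (N - 1) → ZMod 2),
          @ite ℝ (query K N k n q.2 = a) (Classical.propDecidable _)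
            (Fintype.card (SchemeOmega K N) : ℝ)⁻¹ 0)
        = 2 * (Fintype.card (SchemeOmega K N) : ℝ)⁻¹ := by
      rw [Fintype.sum_prod_type]
      calc (∑ _s : ZMod 2, ∑ h : Fin K → Fin (N - 1) → ZMod 2,
            @ite ℝ (query K N k n h = a) (Classical.propDecidable _)
              (Fintype.card (SchemeOmega K N) : ℝ)⁻¹ 0)
          = ∑ _s : ZMod 2, (Fintype.card (SchemeOmega K N) : ℝ)⁻¹ :=
            Finset.sum_congr rfl (fun s _ => hinner)
        _ = 2 * (Fintype.card (SchemeOmega K N) : ℝ)⁻¹ := by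
            rw [Finset.sum_const, Finset.card_univ, ZMod.card, nsmul_eq_mul]
            norm_num
    refine Eq.trans (Finset.sum_congr rfl fun _ _ => key) ?_
    rw [Finset.sum_const, Finset.card_univ, nsmul_eq_mul]
    have hcard : (Fintype.card (SchemeOmega K N) : ℝ)
        = (Fintype.card (Fin K → Fin (N - 1) → ZMod 2) : ℝ) * 2
          * (Fintype.card (Fin K → Fin (N - 1) → ZMod 2) : ℝ) := by
      have : Fintype.card (SchemeOmega K N)
          = Fintype.card (Fin K → Fin (N - 1) → ZMod 2) * 2
            * Fintype.card (Fin K → Fin (N - 1) → ZMod 2) := by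
        simp [SchemeOmega, Fintype.card_prod, ZMod.card]
        ring
      rw [this]; push_cast; ring
    have hpos : (0 : ℝ) < (Fintype.card (Fin K → Fin (N - 1) → ZMod 2) : ℝ) := by
      exact_mod_cast Fintype.card_pos
    rw [hcard]
    field_simp
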